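/- arXiv:1901.01360 — 3 statements merged into one kernel-verified Lean document; each statement's English description precedes it below -/
import Mathlib

section
/- For i ∈ I = {1,…,m}, let F_i = {f_{ij}}_{j∈J} be a sequence in a separable Hilbert space H. The following are equivalent: (i) the family {F_i}_{i∈I} is woven, i.e., there exist universal constants A, B > 0 such that for every partition {σ_i}_{i∈I} of J the family {f_{ij}}_{j∈σ_i, i∈I} is a frame for H with bounds A, B; (ii) there exists A > 0 such that for every partition {σ_i}_{i∈I} of J there is a bounded linear operator T : ⊕_{i∈I} ℓ²(σ_i) → H with T(u_{ij}) = f_{ij} for all j ∈ σ_i, i ∈ I, and A·I_H ≤ T T*, where {u_{ij}}_{j∈σ_i, i∈I} is the standard orthonormal basis of ⊕_{i∈I} ℓ²(σ_i). -/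
local notation "⟪" x ", " y "⟫" => @inner ℂ _ _ x y

noncomputable section
namespace WovenAux
open scoped ENNReal

lemma rpow_toReal_two {r : ℝ} (_hr : 0 ≤ r) : r ^ (2 : ℝ≥0∞).toReal = r ^ 2 := by
  rw [ENNReal.toReal_ofNat, show ((2:ℝ)) = ((2:ℕ):ℝ) by norm_num, Real.rpow_natCast]

variable {H : Type} [NormedAddCommGroup H] [InnerProductSpace ℂ H] [CompleteSpace H]

lemma lp_summable_sq {ι : Type} (y : lp (fun _ : ι => ℂ) 2) :
    Summable fun p => ‖y p‖ ^ 2 := by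
  have h := (lp.memℓp y).summable (by norm_num : 0 < (2:ℝ≥0∞).toReal)
  exact h.congr fun p => rpow_toReal_two (norm_nonneg _)

lemma lp_norm_sq {ι : Type} (y : lp (fun _ : ι => ℂ) 2) :
    ‖y‖ ^ 2 = ∑' p, ‖y p‖ ^ 2 := by
  have h := lp.norm_rpow_eq_tsum (by norm_num : 0 < (2:ℝ≥0∞).toReal) y
  rw [rpow_toReal_two (norm_nonneg _)] at h
  rw [h]
  exact tsum_congr fun p => rpow_toReal_two (norm_nonneg _)

def anaCLM {ι : Type} (g : ι → H) (B : ℝ) (hB : 0 ≤ B)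
    (hs : ∀ x : H, Summable fun p => ‖⟪g p, x⟫‖ ^ 2)
    (hb : ∀ x : H, ∑' p, ‖⟪g p, x⟫‖ ^ 2 ≤ B * ‖x‖ ^ 2) :
    H →L[ℂ] lp (fun _ : ι => ℂ) 2 :=
  LinearMap.mkContinuous
    { toFun := fun x => ⟨fun p => ⟪g p, x⟫,
        memℓp_gen ((hs x).congr fun p => (rpow_toReal_two (norm_nonneg _)).symm)⟩
      map_add' := fun x y => by
        ext p
        simp [lp.coeFn_add, inner_add_right]
        rfl
      map_smul' := fun c x => by
        ext p
        simp [lp.coeFn_smul, inner_smul_right] }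
    (Real.sqrt B)
    (fun x => by
      apply lp.norm_le_of_tsum_le (by norm_num : 0 < (2:ℝ≥0∞).toReal)
        (mul_nonneg (Real.sqrt_nonneg _) (norm_nonneg _))
      have e1 : ∀ p : ι, ‖(⟪g p, x⟫ : ℂ)‖ ^ (2:ℝ≥0∞).toReal = ‖(⟪g p, x⟫ : ℂ)‖ ^ 2 :=
        fun p => rpow_toReal_two (norm_nonneg _)
      calc ∑' p : ι, ‖(⟪g p, x⟫ : ℂ)‖ ^ (2:ℝ≥0∞).toReal
          = ∑' p : ι, ‖(⟪g p, x⟫ : ℂ)‖ ^ 2 := tsum_congr e1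
        _ ≤ B * ‖x‖ ^ 2 := hb x
        _ = (Real.sqrt B * ‖x‖) ^ 2 := by
            rw [mul_pow, Real.sq_sqrt hB]
        _ = (Real.sqrt B * ‖x‖) ^ (2:ℝ≥0∞).toReal :=
            (rpow_toReal_two (mul_nonneg (Real.sqrt_nonneg _) (norm_nonneg _))).symm)

omit [CompleteSpace H] in
lemma anaCLM_apply {ι : Type} (g : ι → H) (B : ℝ) (hB : 0 ≤ B)
    (hs : ∀ x : H, Summable fun p => ‖⟪g p, x⟫‖ ^ 2)
    (hb : ∀ x : H, ∑' p, ‖⟪g p, x⟫‖ ^ 2 ≤ B * ‖x‖ ^ 2) (x : H) (p : ι) :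
    (anaCLM g B hB hs hb x) p = ⟪g p, x⟫ := rfl

lemma adjoint_coord {ι : Type} [DecidableEq ι] {g : ι → H}
    (T : lp (fun _ : ι => ℂ) 2 →L[ℂ] H)
    (hT : ∀ p, T (lp.single 2 p 1) = g p) (x : H) (p : ι) :
    (ContinuousLinearMap.adjoint T x) p = ⟪g p, x⟫ := by
  have h1 : ⟪lp.single 2 p (1:ℂ), ContinuousLinearMap.adjoint T x⟫
      = (ContinuousLinearMap.adjoint T x) p := by
    rw [lp.inner_single_left]
    simp [RCLike.inner_apply]
  rw [← h1, ContinuousLinearMap.adjoint_inner_right, hT]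

lemma tsum_sigma_fin {m : ℕ} {κ : Fin m → Type} (h : (Σ i, κ i) → ℝ)
    (hs : Summable h) : ∑' p, h p = ∑ i, ∑' j, h ⟨i, j⟩ := by
  rw [Summable.tsum_sigma' (fun i => hs.sigma_factor i) hs, tsum_fintype]

end WovenAux
end

set_option maxHeartbeats 1000000 in
open WovenAux in
theorem woven_iff_operator
    {H : Type} [NormedAddCommGroup H] [InnerProductSpace ℂ H] [CompleteSpace H]
    [TopologicalSpace.SeparableSpace H]
    {J : Type} [Countable J] [DecidableEq J] {m : ℕ}
    (f : Fin m → J → H) :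
    (∃ A B : ℝ, 0 < A ∧ 0 < B ∧
      ∀ σ : Fin m → Set J, Pairwise (Function.onFun Disjoint σ) →
        (⋃ i, σ i) = Set.univ →
        (∀ i (x : H), Summable fun j : σ i => ‖⟪x, f i (j : J)⟫‖ ^ 2) ∧
        ∀ x : H,
          A * ‖x‖ ^ 2 ≤ ∑ i, ∑' j : σ i, ‖⟪x, f i (j : J)⟫‖ ^ 2 ∧
          ∑ i, ∑' j : σ i, ‖⟪x, f i (j : J)⟫‖ ^ 2 ≤ B * ‖x‖ ^ 2)
    ↔ (∃ A : ℝ, 0 < A ∧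
        ∀ σ : Fin m → Set J, Pairwise (Function.onFun Disjoint σ) →
          (⋃ i, σ i) = Set.univ →
          ∃ T : lp (fun _ : ((i : Fin m) × σ i) => ℂ) 2 →L[ℂ] H,
            (∀ p : (i : Fin m) × σ i, T (lp.single 2 p 1) = f p.1 (p.2 : J)) ∧
            ∀ x : H, A * ‖x‖ ^ 2 ≤ (⟪T (ContinuousLinearMap.adjoint T x), x⟫).re) := by
  constructor
  · rintro ⟨A, B, hA, hB, hAB⟩
    refine ⟨A, hA, fun σ hd hu => ?_⟩
    obtain ⟨hsum, hbd⟩ := hAB σ hd hu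
    set g : ((i : Fin m) × σ i) → H := fun p => f p.1 p.2 with hg
    have hs : ∀ x : H, Summable fun p : (i : Fin m) × σ i => ‖⟪g p, x⟫‖ ^ 2 := by
      intro x
      have h0 : (fun p : (i : Fin m) × σ i => ‖⟪g p, x⟫‖ ^ 2)
          = fun p : (i : Fin m) × σ i => ‖⟪x, g p⟫‖ ^ 2 :=
        funext fun p => by rw [norm_inner_symm]
      rw [h0]
      exact (summable_sigma_of_nonneg (fun p => sq_nonneg _)).2
        ⟨fun i => hsum i x, Summable.of_finite⟩
    have htsum : ∀ x : H, ∑' p : (i : Fin m) × σ i, ‖⟪g p, x⟫‖ ^ 2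
        = ∑ i, ∑' j : σ i, ‖⟪x, f i (j : J)⟫‖ ^ 2 := by
      intro x
      rw [tsum_sigma_fin _ (hs x)]
      exact Finset.sum_congr rfl fun i _ => tsum_congr fun j => by rw [norm_inner_symm]
    have hb : ∀ x : H, ∑' p : (i : Fin m) × σ i, ‖⟪g p, x⟫‖ ^ 2 ≤ B * ‖x‖ ^ 2 :=
      fun x => (htsum x) ▸ (hbd x).2
    set C := anaCLM g B hB.le hs hb with hC
    refine ⟨ContinuousLinearMap.adjoint C, fun p => ?_, fun x => ?_⟩
    · apply ext_inner_right ℂ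
      intro v
      rw [ContinuousLinearMap.adjoint_inner_left]
      rw [lp.inner_single_left]
      simp only [RCLike.inner_apply, map_one, one_mul, mul_one]
      exact anaCLM_apply g B hB.le hs hb v p
    · have hTT : ContinuousLinearMap.adjoint (ContinuousLinearMap.adjoint C) = C :=
        ContinuousLinearMap.adjoint_adjoint C
      rw [hTT]
      have h1 : ⟪ContinuousLinearMap.adjoint C (C x), x⟫ = ⟪C x, C x⟫ :=
        ContinuousLinearMap.adjoint_inner_left C x (C x)
      have h1' : (⟪C x, C x⟫).re = ‖C x‖ ^ 2 := by
        simpa using inner_self_eq_norm_sq (𝕜 := ℂ) (C x)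
      rw [h1, h1', lp_norm_sq]
      have h2 : ∑' p, ‖(C x) p‖ ^ 2 = ∑ i, ∑' j : σ i, ‖⟪x, f i (j : J)⟫‖ ^ 2 := by
        rw [← htsum x]
        exact tsum_congr fun p => by rw [anaCLM_apply]
      rw [h2]
      exact (hbd x).1
  · rintro ⟨A, hA, hT⟩
    classical
    -- degenerate partitions
    set δ : Fin m → Fin m → Set J := fun i k => if k = i then Set.univ else ∅ with hδ
    have hδd : ∀ i, Pairwise (Function.onFun Disjoint (δ i)) := by
      intro i k l hkl
      rcases eq_or_ne k i with rfl | hk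
      · have : δ k l = ∅ := if_neg (fun h => hkl h.symm)
        simp [Function.onFun, this]
      · have : δ i k = ∅ := if_neg hk
        simp [Function.onFun, this]
    have hδu : ∀ i, (⋃ k, δ i k) = Set.univ := by
      intro i
      apply Set.eq_univ_of_univ_subset
      intro j _
      exact Set.mem_iUnion.2 ⟨i, by simp [hδ]⟩
    have hTi : ∀ i : Fin m, ∃ T : lp (fun _ : ((k : Fin m) × (δ i k)) => ℂ) 2 →L[ℂ] H,
        (∀ p : (k : Fin m) × (δ i k), T (lp.single 2 p 1) = f p.1 (p.2 : J)) ∧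
        ∀ x : H, A * ‖x‖ ^ 2 ≤ (⟪T (ContinuousLinearMap.adjoint T x), x⟫).re :=
      fun i => hT (δ i) (hδd i) (hδu i)
    choose Ti hTi1 _hTi2 using hTi
    -- full-J summability and bound for each i
    have hmem : ∀ i (j : J), j ∈ δ i i := fun i j => by simp [hδ]
    have key : ∀ (i : Fin m) (x : H),
        Summable (fun j : J => ‖⟪x, f i j⟫‖ ^ 2) ∧
        ∑' j : J, ‖⟪x, f i j⟫‖ ^ 2 ≤ ‖Ti i‖ ^ 2 * ‖x‖ ^ 2 := by
      intro i x
      set S := ContinuousLinearMap.adjoint (Ti i) x with hS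
      have hco : ∀ p : (k : Fin m) × (δ i k), S p = ⟪f p.1 (p.2 : J), x⟫ :=
        adjoint_coord (Ti i) (hTi1 i) x
      have hsig : Summable fun p : (k : Fin m) × (δ i k) => ‖⟪f p.1 (p.2 : J), x⟫‖ ^ 2 :=
        (lp_summable_sq S).congr fun p => by rw [hco]
      set e : J → (k : Fin m) × (δ i k) := fun j => ⟨i, ⟨j, hmem i j⟩⟩ with he
      have hei : Function.Injective e := by
        intro a b hab
        simpa [he, Sigma.mk.inj_iff, Subtype.ext_iff] using hab
      have hflip : ∀ j : J, ‖⟪x, f i j⟫‖ ^ 2 = ‖⟪f i j, x⟫‖ ^ 2 :=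
        fun j => by rw [norm_inner_symm]
      constructor
      · have := hsig.comp_injective hei
        exact this.congr fun j => (hflip j).symm
      · have hle : ∑' j : J, ‖⟪x, f i j⟫‖ ^ 2
            ≤ ∑' p : (k : Fin m) × (δ i k), ‖⟪f p.1 (p.2 : J), x⟫‖ ^ 2 := by
          apply Summable.tsum_le_tsum_of_inj e hei (fun c _ => sq_nonneg _)
            (fun j => le_of_eq (hflip j))
            ((hsig.comp_injective hei).congr fun j => (hflip j).symm) hsig
        refine hle.trans ?_
        have h1 : ∑' p : (k : Fin m) × (δ i k), ‖⟪f p.1 (p.2 : J), x⟫‖ ^ 2 = ‖S‖ ^ 2 := by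
          rw [lp_norm_sq]
          exact tsum_congr fun p => by rw [hco]
        rw [h1]
        have h2 : ‖S‖ ≤ ‖Ti i‖ * ‖x‖ := by
          calc ‖S‖ ≤ ‖ContinuousLinearMap.adjoint (Ti i)‖ * ‖x‖ :=
                (ContinuousLinearMap.adjoint (Ti i)).le_opNorm x
            _ = ‖Ti i‖ * ‖x‖ := by
                rw [ContinuousLinearMap.adjoint.norm_map]
        calc ‖S‖ ^ 2 ≤ (‖Ti i‖ * ‖x‖) ^ 2 := by
              exact pow_le_pow_left₀ (norm_nonneg _) h2 2
          _ = ‖Ti i‖ ^ 2 * ‖x‖ ^ 2 := mul_pow _ _ _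
    refine ⟨A, (∑ i, ‖Ti i‖ ^ 2) + 1, hA, by positivity, fun σ hd hu => ?_⟩
    have hsub : ∀ i (x : H), Summable fun j : σ i => ‖⟪x, f i (j : J)⟫‖ ^ 2 :=
      fun i x => (key i x).1.subtype (σ i)
    refine ⟨hsub, fun x => ?_⟩
    obtain ⟨T, hT1, hT2⟩ := hT σ hd hu
    constructor
    · refine (hT2 x).trans (le_of_eq ?_)
      set S := ContinuousLinearMap.adjoint T x with hS
      have h1 : ⟪T S, x⟫ = ⟪S, S⟫ :=
        (ContinuousLinearMap.adjoint_inner_right T S x).symm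
      have h1' : (⟪S, S⟫).re = ‖S‖ ^ 2 := by
        simpa using inner_self_eq_norm_sq (𝕜 := ℂ) S
      rw [h1, h1', lp_norm_sq]
      have hco : ∀ p : (i : Fin m) × σ i, S p = ⟪f p.1 (p.2 : J), x⟫ :=
        adjoint_coord T hT1 x
      have h2 : ∑' p, ‖S p‖ ^ 2
          = ∑' p : (i : Fin m) × σ i, ‖⟪f p.1 (p.2 : J), x⟫‖ ^ 2 :=
        tsum_congr fun p => by rw [hco]
      rw [h2, tsum_sigma_fin _ ((lp_summable_sq S).congr fun p => by rw [hco])]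
      exact Finset.sum_congr rfl fun i _ => tsum_congr fun j => by rw [norm_inner_symm]
    · have step : ∀ i : Fin m, ∑' j : σ i, ‖⟪x, f i (j : J)⟫‖ ^ 2
          ≤ ‖Ti i‖ ^ 2 * ‖x‖ ^ 2 := by
        intro i
        refine le_trans ?_ (key i x).2
        exact Summable.tsum_subtype_le (fun j : J => ‖⟪x, f i j⟫‖ ^ 2) (σ i)
          (fun j => sq_nonneg _) (key i x).1
      calc ∑ i, ∑' j : σ i, ‖⟪x, f i (j : J)⟫‖ ^ 2
          ≤ ∑ i, ‖Ti i‖ ^ 2 * ‖x‖ ^ 2 := Finset.sum_le_sum fun i _ => step i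
        _ = (∑ i, ‖Ti i‖ ^ 2) * ‖x‖ ^ 2 := (Finset.sum_mul _ _ _).symm
        _ ≤ ((∑ i, ‖Ti i‖ ^ 2) + 1) * ‖x‖ ^ 2 := by nlinarith [sq_nonneg ‖x‖]
end

section
/- Let F = {f_j}_{j∈J} and G = {g_j}_{j∈J} be Bessel sequences in a separable Hilbert space H with Bessel bounds B₁ and B₂ respectively, such that f = Σ_{j∈J} ⟨f, f_j⟩ g_j = Σ_{j∈J} ⟨f, g_j⟩ f_j for all f ∈ H, and such that for every σ ⊂ J and every f ∈ H, Σ_{j∈σ} ⟨f, f_j⟩ g_j = Σ_{j∈σ} ⟨f, g_j⟩ f_j. Then F and G are woven frames for H: for every σ ⊂ J and all f ∈ H, (1/(2 max{B₁, B₂}))‖f‖² ≤ Σ_{j∈σ} |⟨f, f_j⟩|² + Σ_{j∈σ^c} |⟨f, g_j⟩|² ≤ (B₁ + B₂)‖f‖². -/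
/- STATEMENT 5: if F and G are Bessel sequences that are dual to each other
(f = Σ⟨f,f_j⟩g_j = Σ⟨f,g_j⟩f_j) and whose partial synthesis operators agree
(Σ_{j∈σ}⟨f,f_j⟩g_j = Σ_{j∈σ}⟨f,g_j⟩f_j for every σ), then F and G are woven
frames with the explicit bounds 1/(2 max{B₁,B₂}) and B₁ + B₂. -/

local notation "⟪" x ", " y "⟫" => @inner ℂ _ _ x y

private lemma amgm_aux (B u v : ℝ) (hB : 0 < B) :
    u * v ≤ B * u ^ 2 + v ^ 2 / (4 * B) := by
  have h4B : (0:ℝ) < 4 * B := by linarith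
  have hw : v ^ 2 / (4 * B) * (4 * B) = v ^ 2 := div_mul_cancel₀ _ h4B.ne'
  nlinarith [sq_nonneg (2 * B * u - v), sq_nonneg u,
    mul_pos hB hB, div_nonneg (sq_nonneg v) h4B.le]

private lemma finset_synthesis_bound {H : Type} [NormedAddCommGroup H]
    [InnerProductSpace ℂ H] {J : Type} (φ : J → H) (B : ℝ) (hB : 0 < B)
    (hS : ∀ x : H, Summable fun j : J => ‖⟪x, φ j⟫‖ ^ 2)
    (hBess : ∀ x : H, ∑' j : J, ‖⟪x, φ j⟫‖ ^ 2 ≤ B * ‖x‖ ^ 2)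
    (c : J → ℂ) (s : Finset J) :
    ‖∑ j ∈ s, c j • φ j‖ ^ 2 ≤ (4 / 3) * B * ∑ j ∈ s, ‖c j‖ ^ 2 := by
  set v : H := ∑ j ∈ s, c j • φ j with hv
  have h2 : ⟪v, v⟫ = ∑ j ∈ s, c j * ⟪v, φ j⟫ := by
    nth_rewrite 2 [hv]
    rw [inner_sum]
    exact Finset.sum_congr rfl fun j _ => inner_smul_right _ _ _
  have hsum_le : ∑ j ∈ s, ‖⟪v, φ j⟫‖ ^ 2 ≤ B * ‖v‖ ^ 2 :=
    le_trans (Summable.sum_le_tsum s (fun j _ => by positivity) (hS v)) (hBess v)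
  have key : ‖v‖ ^ 2 ≤ B * (∑ j ∈ s, ‖c j‖ ^ 2) + ‖v‖ ^ 2 / 4 := by
    calc ‖v‖ ^ 2 = RCLike.re ⟪v, v⟫ := (inner_self_eq_norm_sq v).symm
      _ ≤ ‖⟪v, v⟫‖ := RCLike.re_le_norm _
      _ = ‖∑ j ∈ s, c j * ⟪v, φ j⟫‖ := by rw [h2]
      _ ≤ ∑ j ∈ s, ‖c j * ⟪v, φ j⟫‖ := norm_sum_le _ _
      _ = ∑ j ∈ s, ‖c j‖ * ‖⟪v, φ j⟫‖ := by simp [norm_mul]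
      _ ≤ ∑ j ∈ s, (B * ‖c j‖ ^ 2 + ‖⟪v, φ j⟫‖ ^ 2 / (4 * B)) :=
          Finset.sum_le_sum fun j _ => amgm_aux B _ _ hB
      _ = B * (∑ j ∈ s, ‖c j‖ ^ 2) + (∑ j ∈ s, ‖⟪v, φ j⟫‖ ^ 2) / (4 * B) := by
          rw [Finset.sum_add_distrib, ← Finset.mul_sum, ← Finset.sum_div]
      _ ≤ B * (∑ j ∈ s, ‖c j‖ ^ 2) + (B * ‖v‖ ^ 2) / (4 * B) := by gcongr
      _ = B * (∑ j ∈ s, ‖c j‖ ^ 2) + ‖v‖ ^ 2 / 4 := by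
          rw [show (4 : ℝ) * B = B * 4 by ring, mul_div_mul_left _ _ hB.ne']
  linarith

private lemma synthesis_summable {H : Type} [NormedAddCommGroup H]
    [InnerProductSpace ℂ H] [CompleteSpace H] {J : Type} (φ : J → H) (B : ℝ)
    (hB : 0 < B)
    (hS : ∀ x : H, Summable fun j : J => ‖⟪x, φ j⟫‖ ^ 2)
    (hBess : ∀ x : H, ∑' j : J, ‖⟪x, φ j⟫‖ ^ 2 ≤ B * ‖x‖ ^ 2)
    (c : J → ℂ) (hc : Summable fun j : J => ‖c j‖ ^ 2) :
    Summable fun j : J => c j • φ j := by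
  rw [summable_iff_vanishing]
  intro e he
  obtain ⟨ε, hε, hball⟩ := Metric.mem_nhds_iff.mp he
  obtain ⟨s, hs⟩ := (summable_iff_vanishing.mp hc)
    (Metric.ball 0 (3 * ε ^ 2 / (8 * B))) (Metric.ball_mem_nhds _ (by positivity))
  refine ⟨s, fun t ht => hball (Metric.mem_ball.mpr ?_)⟩
  have h1 := hs t ht
  rw [Metric.mem_ball, dist_zero_right, Real.norm_eq_abs] at h1
  have h2 : ∑ j ∈ t, ‖c j‖ ^ 2 < 3 * ε ^ 2 / (8 * B) :=
    lt_of_le_of_lt (le_abs_self _) h1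
  have h3 := finset_synthesis_bound φ B hB hS hBess c t
  have h4 : ‖∑ j ∈ t, c j • φ j‖ ^ 2 < ε ^ 2 := by
    have := mul_lt_mul_of_pos_left h2 (show (0:ℝ) < (4/3) * B by positivity)
    have heq : (4 / 3) * B * (3 * ε ^ 2 / (8 * B)) = ε ^ 2 / 2 := by
      field_simp; ring
    nlinarith
  rw [dist_zero_right]
  nlinarith [norm_nonneg (∑ j ∈ t, c j • φ j)]

theorem dual_bessel_woven
    {H : Type} [NormedAddCommGroup H] [InnerProductSpace ℂ H] [CompleteSpace H]
    [TopologicalSpace.SeparableSpace H]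
    {J : Type} [Countable J]
    (f g : J → H) (B₁ B₂ : ℝ) (hB₁ : 0 < B₁) (hB₂ : 0 < B₂)
    (hfSummable : ∀ x : H, Summable fun j : J => ‖⟪x, f j⟫‖ ^ 2)
    (hgSummable : ∀ x : H, Summable fun j : J => ‖⟪x, g j⟫‖ ^ 2)
    (hfBessel : ∀ x : H, ∑' j : J, ‖⟪x, f j⟫‖ ^ 2 ≤ B₁ * ‖x‖ ^ 2)
    (hgBessel : ∀ x : H, ∑' j : J, ‖⟪x, g j⟫‖ ^ 2 ≤ B₂ * ‖x‖ ^ 2)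
    (hdual₁ : ∀ x : H, (∑' j : J, ⟪f j, x⟫ • g j) = x)
    (hdual₂ : ∀ x : H, (∑' j : J, ⟪g j, x⟫ • f j) = x)
    (hpartial : ∀ σ : Set J, ∀ x : H,
      (∑' j : σ, ⟪f (j : J), x⟫ • g (j : J)) = ∑' j : σ, ⟪g (j : J), x⟫ • f (j : J)) :
    ∀ σ : Set J, ∀ x : H,
      (1 / (2 * max B₁ B₂)) * ‖x‖ ^ 2
        ≤ (∑' j : σ, ‖⟪x, f (j : J)⟫‖ ^ 2) + (∑' j : ↥σᶜ, ‖⟪x, g (j : J)⟫‖ ^ 2) ∧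
      (∑' j : σ, ‖⟪x, f (j : J)⟫‖ ^ 2) + (∑' j : ↥σᶜ, ‖⟪x, g (j : J)⟫‖ ^ 2)
        ≤ (B₁ + B₂) * ‖x‖ ^ 2 := by
  intro σ x
  set M : ℝ := max B₁ B₂ with hM
  have hM0 : 0 < M := lt_max_of_lt_left hB₁
  have hB₁M : B₁ ≤ M := le_max_left _ _
  have hB₂M : B₂ ≤ M := le_max_right _ _
  set a : ℝ := ∑' j : σ, ‖⟪x, f (j : J)⟫‖ ^ 2 with ha
  set b : ℝ := ∑' j : ↥σᶜ, ‖⟪x, g (j : J)⟫‖ ^ 2 with hb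
  -- summable families restricted to subtypes
  have hFs : Summable fun j : σ => ‖⟪x, f (j : J)⟫‖ ^ 2 := (hfSummable x).subtype σ
  have hGs : Summable fun j : ↥σᶜ => ‖⟪x, g (j : J)⟫‖ ^ 2 := (hgSummable x).subtype σᶜ
  have hGσ : Summable fun j : σ => ‖⟪x, g (j : J)⟫‖ ^ 2 := (hgSummable x).subtype σ
  have hFσc : Summable fun j : ↥σᶜ => ‖⟪x, f (j : J)⟫‖ ^ 2 := (hfSummable x).subtype σᶜ
  -- upper bound
  have ha_le : a ≤ B₁ * ‖x‖ ^ 2 :=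
    le_trans (Summable.tsum_subtype_le _ σ (fun j => by positivity) (hfSummable x)) (hfBessel x)
  have hb_le : b ≤ B₂ * ‖x‖ ^ 2 :=
    le_trans (Summable.tsum_subtype_le _ σᶜ (fun j => by positivity) (hgSummable x)) (hgBessel x)
  have hupper : a + b ≤ (B₁ + B₂) * ‖x‖ ^ 2 := by nlinarith
  -- summability of vector series
  have hS1 : Summable fun j : σ => ⟪f (j : J), x⟫ • g (j : J) := by
    refine synthesis_summable (fun j : σ => g (j : J)) B₂ hB₂ ?_ ?_ _ ?_
    · intro y; exact (hgSummable y).subtype σ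
    · intro y
      exact le_trans (Summable.tsum_subtype_le _ σ (fun j => by positivity) (hgSummable y))
        (hgBessel y)
    · exact hFs.congr fun j => by rw [norm_inner_symm]
  have hS2 : Summable fun j : ↥σᶜ => ⟪g (j : J), x⟫ • f (j : J) := by
    refine synthesis_summable (fun j : ↥σᶜ => f (j : J)) B₁ hB₁ ?_ ?_ _ ?_
    · intro y; exact (hfSummable y).subtype σᶜ
    · intro y
      exact le_trans (Summable.tsum_subtype_le _ σᶜ (fun j => by positivity) (hfSummable y))
        (hfBessel y)
    · exact hGs.congr fun j => by rw [norm_inner_symm]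
  have hSall : Summable fun j : J => ⟪g j, x⟫ • f j := by
    refine synthesis_summable f B₁ hB₁ hfSummable hfBessel _ ?_
    exact (hgSummable x).congr fun j => by rw [norm_inner_symm]
  -- x splits
  have hsplit : (∑' j : σ, ⟪g (j : J), x⟫ • f (j : J))
      + (∑' j : ↥σᶜ, ⟪g (j : J), x⟫ • f (j : J)) = x := by
    rw [Summable.tsum_subtype_add_tsum_subtype_compl hSall σ, hdual₂ x]
  have hx : x = (∑' j : σ, ⟪f (j : J), x⟫ • g (j : J))
      + (∑' j : ↥σᶜ, ⟪g (j : J), x⟫ • f (j : J)) := by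
    rw [hpartial σ x]; exact hsplit.symm
  -- expand inner products
  have hT1 : ⟪x, ∑' j : σ, ⟪f (j : J), x⟫ • g (j : J)⟫
      = ∑' j : σ, ⟪f (j : J), x⟫ * ⟪x, g (j : J)⟫ := by
    have := ContinuousLinearMap.map_tsum (innerSL ℂ x) hS1
    simpa [innerSL_apply_apply, inner_smul_right] using this
  have hT2 : ⟪x, ∑' j : ↥σᶜ, ⟪g (j : J), x⟫ • f (j : J)⟫
      = ∑' j : ↥σᶜ, ⟪g (j : J), x⟫ * ⟪x, f (j : J)⟫ := by
    have := ContinuousLinearMap.map_tsum (innerSL ℂ x) hS2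
    simpa [innerSL_apply_apply, inner_smul_right] using this
  have hxx : (‖x‖ ^ 2 : ℝ)
      = RCLike.re ((∑' j : σ, ⟪f (j : J), x⟫ * ⟪x, g (j : J)⟫)
        + ∑' j : ↥σᶜ, ⟪g (j : J), x⟫ * ⟪x, f (j : J)⟫) := by
    calc (‖x‖ ^ 2 : ℝ) = RCLike.re ⟪x, x⟫ := (inner_self_eq_norm_sq x).symm
      _ = RCLike.re ⟪x, (∑' j : σ, ⟪f (j : J), x⟫ • g (j : J))
            + ∑' j : ↥σᶜ, ⟪g (j : J), x⟫ • f (j : J)⟫ := by nth_rewrite 2 [hx]; rfl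
      _ = _ := by rw [inner_add_right, hT1, hT2]
  -- summability of norm series with AM-GM majorants
  have hmaj1 : Summable fun j : σ =>
      M * ‖⟪x, f (j : J)⟫‖ ^ 2 + ‖⟪x, g (j : J)⟫‖ ^ 2 / (4 * M) :=
    (hFs.mul_left M).add (hGσ.div_const _)
  have hmaj2 : Summable fun j : ↥σᶜ =>
      M * ‖⟪x, g (j : J)⟫‖ ^ 2 + ‖⟪x, f (j : J)⟫‖ ^ 2 / (4 * M) :=
    (hGs.mul_left M).add (hFσc.div_const _)
  have hle1 : ∀ j : σ, ‖⟪f (j : J), x⟫ * ⟪x, g (j : J)⟫‖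
      ≤ M * ‖⟪x, f (j : J)⟫‖ ^ 2 + ‖⟪x, g (j : J)⟫‖ ^ 2 / (4 * M) := by
    intro j
    rw [norm_mul, norm_inner_symm (f (j : J)) x]
    exact amgm_aux M _ _ hM0
  have hle2 : ∀ j : ↥σᶜ, ‖⟪g (j : J), x⟫ * ⟪x, f (j : J)⟫‖
      ≤ M * ‖⟪x, g (j : J)⟫‖ ^ 2 + ‖⟪x, f (j : J)⟫‖ ^ 2 / (4 * M) := by
    intro j
    rw [norm_mul, norm_inner_symm (g (j : J)) x]
    exact amgm_aux M _ _ hM0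
  have hn1 : Summable fun j : σ => ‖⟪f (j : J), x⟫ * ⟪x, g (j : J)⟫‖ :=
    Summable.of_nonneg_of_le (fun j => norm_nonneg _) hle1 hmaj1
  have hn2 : Summable fun j : ↥σᶜ => ‖⟪g (j : J), x⟫ * ⟪x, f (j : J)⟫‖ :=
    Summable.of_nonneg_of_le (fun j => norm_nonneg _) hle2 hmaj2
  -- bound the two scalar tsums
  have hGσ_le : (∑' j : σ, ‖⟪x, g (j : J)⟫‖ ^ 2) ≤ B₂ * ‖x‖ ^ 2 :=
    le_trans (Summable.tsum_subtype_le _ σ (fun j => by positivity) (hgSummable x)) (hgBessel x)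
  have hFσc_le : (∑' j : ↥σᶜ, ‖⟪x, f (j : J)⟫‖ ^ 2) ≤ B₁ * ‖x‖ ^ 2 :=
    le_trans (Summable.tsum_subtype_le _ σᶜ (fun j => by positivity) (hfSummable x)) (hfBessel x)
  have hbound1 : ‖∑' j : σ, ⟪f (j : J), x⟫ * ⟪x, g (j : J)⟫‖
      ≤ M * a + ‖x‖ ^ 2 / 4 := by
    calc ‖∑' j : σ, ⟪f (j : J), x⟫ * ⟪x, g (j : J)⟫‖
        ≤ ∑' j : σ, ‖⟪f (j : J), x⟫ * ⟪x, g (j : J)⟫‖ := norm_tsum_le_tsum_norm hn1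
      _ ≤ ∑' j : σ, (M * ‖⟪x, f (j : J)⟫‖ ^ 2 + ‖⟪x, g (j : J)⟫‖ ^ 2 / (4 * M)) :=
          Summable.tsum_le_tsum hle1 hn1 hmaj1
      _ = M * a + (∑' j : σ, ‖⟪x, g (j : J)⟫‖ ^ 2) / (4 * M) := by
          rw [Summable.tsum_add (hFs.mul_left M) (hGσ.div_const _), tsum_mul_left, tsum_div_const]
      _ ≤ M * a + ‖x‖ ^ 2 / 4 := by
          have h : (∑' j : σ, ‖⟪x, g (j : J)⟫‖ ^ 2) / (4 * M) ≤ ‖x‖ ^ 2 / 4 := by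
            rw [div_le_div_iff₀ (by positivity) (by norm_num)]
            nlinarith [sq_nonneg ‖x‖]
          linarith
  have hbound2 : ‖∑' j : ↥σᶜ, ⟪g (j : J), x⟫ * ⟪x, f (j : J)⟫‖
      ≤ M * b + ‖x‖ ^ 2 / 4 := by
    calc ‖∑' j : ↥σᶜ, ⟪g (j : J), x⟫ * ⟪x, f (j : J)⟫‖
        ≤ ∑' j : ↥σᶜ, ‖⟪g (j : J), x⟫ * ⟪x, f (j : J)⟫‖ := norm_tsum_le_tsum_norm hn2
      _ ≤ ∑' j : ↥σᶜ, (M * ‖⟪x, g (j : J)⟫‖ ^ 2 + ‖⟪x, f (j : J)⟫‖ ^ 2 / (4 * M)) :=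
          Summable.tsum_le_tsum hle2 hn2 hmaj2
      _ = M * b + (∑' j : ↥σᶜ, ‖⟪x, f (j : J)⟫‖ ^ 2) / (4 * M) := by
          rw [Summable.tsum_add (hGs.mul_left M) (hFσc.div_const _), tsum_mul_left, tsum_div_const]
      _ ≤ M * b + ‖x‖ ^ 2 / 4 := by
          have h : (∑' j : ↥σᶜ, ‖⟪x, f (j : J)⟫‖ ^ 2) / (4 * M) ≤ ‖x‖ ^ 2 / 4 := by
            rw [div_le_div_iff₀ (by positivity) (by norm_num)]
            nlinarith [sq_nonneg ‖x‖]
          linarith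
  have hmain : ‖x‖ ^ 2 ≤ M * a + M * b + ‖x‖ ^ 2 / 2 := by
    have h5 : (‖x‖ ^ 2 : ℝ)
        ≤ ‖(∑' j : σ, ⟪f (j : J), x⟫ * ⟪x, g (j : J)⟫)
          + ∑' j : ↥σᶜ, ⟪g (j : J), x⟫ * ⟪x, f (j : J)⟫‖ := by
      rw [hxx]; exact RCLike.re_le_norm _
    have h6 := norm_add_le (∑' j : σ, ⟪f (j : J), x⟫ * ⟪x, g (j : J)⟫)
      (∑' j : ↥σᶜ, ⟪g (j : J), x⟫ * ⟪x, f (j : J)⟫)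
    linarith
  constructor
  · rw [div_mul_eq_mul_div, div_le_iff₀ (by positivity)]
    nlinarith
  · exact hupper
end

section
/- For i ∈ I = {1,…,m}, let F_i = {f_{ij}}_{j∈J} be a frame for a separable Hilbert space H with bounds A_i, B_i. Fix k ∈ I and suppose that for every σ ⊂ J and every i ≠ k, the bounded linear operator P_i^σ defined by P_i^σ(f) = Σ_{j∈σ} ⟨f, f_{ij}⟩ f_{ij} − Σ_{j∈σ} ⟨f, f_{kj}⟩ f_{kj} is positive (i.e., ⟨P_i^σ(f), f⟩ ≥ 0 for all f ∈ H). Then the family of frames {F_i}_{i∈I} is woven: for every partition {σ_i}_{i∈I} of J and all f ∈ H, A_k‖f‖² ≤ Σ_{i∈I} Σ_{j∈σ_i} |⟨f, f_{ij}⟩|² ≤ (Σ_{i∈I} B_i)‖f‖². -/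
/- STATEMENT 8: if for a fixed k and every σ ⊂ J, i ≠ k, the operator
P_i^σ(f) = Σ_{j∈σ}⟨f,f_{ij}⟩f_{ij} − Σ_{j∈σ}⟨f,f_{kj}⟩f_{kj} is positive, then
the family {F_i}_{i∈I} is woven with universal bounds A_k and Σ_i B_i. -/

local notation "⟪" x ", " y "⟫" => @inner ℂ _ _ x y

section Aux

variable {H : Type} [NormedAddCommGroup H] [InnerProductSpace ℂ H] [CompleteSpace H]

/-- finite Bessel-type estimate for the synthesis sums -/
private lemma aux_finite {ι : Type*} (g : ι → H) (t : Finset ι) (C : ℝ) (hC : 0 ≤ C)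
    (hB : ∀ y : H, ∑ j ∈ t, ‖⟪y, g j⟫‖ ^ 2 ≤ C * ‖y‖ ^ 2) (x : H) :
    ‖∑ j ∈ t, ⟪g j, x⟫ • g j‖ ^ 2 ≤ C * ∑ j ∈ t, ‖⟪x, g j⟫‖ ^ 2 := by
  set S := ∑ j ∈ t, ⟪g j, x⟫ • g j with hSdef
  have hsum_nonneg : (0:ℝ) ≤ ∑ j ∈ t, ‖⟪x, g j⟫‖ ^ 2 :=
    Finset.sum_nonneg fun j _ => sq_nonneg _
  by_cases h0 : S = 0
  · rw [h0]
    simpa using mul_nonneg hC hsum_nonneg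
  · have hSpos : (0:ℝ) < ‖S‖ ^ 2 := pow_pos (norm_pos_iff.mpr h0) 2
    have h1 : ‖S‖ ^ 2 ≤ ∑ j ∈ t, ‖⟪x, g j⟫‖ * ‖⟪g j, S⟫‖ := by
      have e1 : (‖S‖ ^ 2 : ℝ) = RCLike.re ⟪S, S⟫ := (inner_self_eq_norm_sq (𝕜 := ℂ) S).symm
      have e2 : ⟪S, S⟫ = ∑ j ∈ t, (starRingEnd ℂ) ⟪g j, x⟫ * ⟪g j, S⟫ := by
        rw [hSdef, sum_inner]
        exact Finset.sum_congr rfl fun j _ => inner_smul_left _ _ _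
      rw [e1, e2, map_sum]
      refine Finset.sum_le_sum fun j _ => ?_
      calc RCLike.re ((starRingEnd ℂ) ⟪g j, x⟫ * ⟪g j, S⟫)
          ≤ ‖(starRingEnd ℂ) ⟪g j, x⟫ * ⟪g j, S⟫‖ := RCLike.re_le_norm _
        _ = ‖⟪g j, x⟫‖ * ‖⟪g j, S⟫‖ := by rw [norm_mul, RCLike.norm_conj]
        _ = ‖⟪x, g j⟫‖ * ‖⟪g j, S⟫‖ := by rw [norm_inner_symm]
    have h2 : (∑ j ∈ t, ‖⟪x, g j⟫‖ * ‖⟪g j, S⟫‖) ^ 2 ≤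
        (∑ j ∈ t, ‖⟪x, g j⟫‖ ^ 2) * (∑ j ∈ t, ‖⟪g j, S⟫‖ ^ 2) :=
      Finset.sum_mul_sq_le_sq_mul_sq t _ _
    have h3 : ∑ j ∈ t, ‖⟪g j, S⟫‖ ^ 2 ≤ C * ‖S‖ ^ 2 := by
      have := hB S
      calc ∑ j ∈ t, ‖⟪g j, S⟫‖ ^ 2 = ∑ j ∈ t, ‖⟪S, g j⟫‖ ^ 2 :=
            Finset.sum_congr rfl fun j _ => by rw [norm_inner_symm]
        _ ≤ C * ‖S‖ ^ 2 := this
    have h4 : (‖S‖ ^ 2) ^ 2 ≤ (∑ j ∈ t, ‖⟪x, g j⟫‖ ^ 2) * (C * ‖S‖ ^ 2) := by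
      calc (‖S‖ ^ 2) ^ 2 ≤ (∑ j ∈ t, ‖⟪x, g j⟫‖ * ‖⟪g j, S⟫‖) ^ 2 := by
            apply pow_le_pow_left₀ (le_of_lt hSpos) h1
        _ ≤ (∑ j ∈ t, ‖⟪x, g j⟫‖ ^ 2) * (∑ j ∈ t, ‖⟪g j, S⟫‖ ^ 2) := h2
        _ ≤ (∑ j ∈ t, ‖⟪x, g j⟫‖ ^ 2) * (C * ‖S‖ ^ 2) :=
            mul_le_mul_of_nonneg_left h3 hsum_nonneg
    nlinarith [h4, hSpos]

/-- summability of the synthesis series from a Bessel bound -/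
private lemma aux_summable {ι : Type*} (g : ι → H) (C : ℝ) (hC : 0 ≤ C)
    (hB : ∀ y : H, ∀ t : Finset ι, ∑ j ∈ t, ‖⟪y, g j⟫‖ ^ 2 ≤ C * ‖y‖ ^ 2) (x : H)
    (hx : Summable fun j : ι => ‖⟪x, g j⟫‖ ^ 2) :
    Summable fun j : ι => ⟪g j, x⟫ • g j := by
  rw [summable_iff_vanishing_norm]
  intro ε hε
  have hδ : (0:ℝ) < ε ^ 2 / (C + 1) := by positivity
  obtain ⟨s, hs⟩ := summable_iff_vanishing_norm.mp hx (ε ^ 2 / (C + 1)) hδ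
  refine ⟨s, fun t ht => ?_⟩
  have h1 : ‖∑ j ∈ t, ⟪g j, x⟫ • g j‖ ^ 2 ≤ C * ∑ j ∈ t, ‖⟪x, g j⟫‖ ^ 2 :=
    aux_finite g t C hC (fun y => hB y t) x
  have h2 : ∑ j ∈ t, ‖⟪x, g j⟫‖ ^ 2 < ε ^ 2 / (C + 1) := by
    have := hs t ht
    have hnn : (0:ℝ) ≤ ∑ j ∈ t, ‖⟪x, g j⟫‖ ^ 2 :=
      Finset.sum_nonneg fun j _ => by positivity
    rwa [Real.norm_of_nonneg hnn] at this
  have h3 : ‖∑ j ∈ t, ⟪g j, x⟫ • g j‖ ^ 2 < ε ^ 2 := by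
    calc ‖∑ j ∈ t, ⟪g j, x⟫ • g j‖ ^ 2 ≤ C * ∑ j ∈ t, ‖⟪x, g j⟫‖ ^ 2 := h1
      _ ≤ C * (ε ^ 2 / (C + 1)) := by
          apply mul_le_mul_of_nonneg_left (le_of_lt h2) hC
      _ < ε ^ 2 := by
          rw [mul_div_assoc']
          rw [div_lt_iff₀ (by linarith)]
          nlinarith
  exact lt_of_pow_lt_pow_left₀ 2 (le_of_lt hε) h3

/-- the quadratic form of the synthesis operator -/
private lemma aux_inner {ι : Type*} (g : ι → H) (x : H)
    (hs : Summable fun j : ι => ⟪g j, x⟫ • g j) :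
    (⟪∑' j : ι, ⟪g j, x⟫ • g j, x⟫).re = ∑' j : ι, ‖⟪x, g j⟫‖ ^ 2 := by
  have h1 : ⟪x, ∑' j : ι, ⟪g j, x⟫ • g j⟫ = ∑' j : ι, ⟪x, ⟪g j, x⟫ • g j⟫ := by
    exact (ContinuousLinearMap.map_tsum (innerSL ℂ x) hs)
  have h2 : ∀ j : ι, ⟪x, ⟪g j, x⟫ • g j⟫ = ((‖⟪x, g j⟫‖ ^ 2 : ℝ) : ℂ) := by
    intro j
    rw [inner_smul_right, ← inner_conj_symm (g j) x, RCLike.conj_mul]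
    norm_cast
  have hsum2 : Summable fun j : ι => ⟪x, ⟪g j, x⟫ • g j⟫ :=
    (innerSL ℂ x).summable hs
  have h3 : (⟪x, ∑' j : ι, ⟪g j, x⟫ • g j⟫).re = ∑' j : ι, ‖⟪x, g j⟫‖ ^ 2 := by
    rw [h1, Complex.re_tsum hsum2]
    apply tsum_congr
    intro j
    rw [h2 j, Complex.ofReal_re]
  calc (⟪∑' j : ι, ⟪g j, x⟫ • g j, x⟫).re
      = ((starRingEnd ℂ) ⟪x, ∑' j : ι, ⟪g j, x⟫ • g j⟫).re := by
        rw [inner_conj_symm]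
    _ = (⟪x, ∑' j : ι, ⟪g j, x⟫ • g j⟫).re := Complex.conj_re _
    _ = ∑' j : ι, ‖⟪x, g j⟫‖ ^ 2 := h3

/-- tsum over a subtype is at most the full tsum for nonneg summable functions -/
private lemma aux_tsum_subtype_le {ι : Type*} (F : ι → ℝ) (hF : ∀ j, 0 ≤ F j)
    (hs : Summable F) (s : Set ι) : ∑' j : s, F j ≤ ∑' j : ι, F j := by
  rw [tsum_subtype]
  exact Summable.tsum_le_tsum (fun j => Set.indicator_le_self' (fun j _ => hF j) j)
    (hs.indicator s) hs

end Aux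

theorem positive_difference_implies_woven
    {H : Type} [NormedAddCommGroup H] [InnerProductSpace ℂ H] [CompleteSpace H]
    [TopologicalSpace.SeparableSpace H]
    {J : Type} [Countable J] {m : ℕ}
    (f : Fin m → J → H) (A B : Fin m → ℝ) (hA : ∀ i, 0 < A i)
    (hSummable : ∀ i (x : H), Summable fun j : J => ‖⟪x, f i j⟫‖ ^ 2)
    (hframe : ∀ i (x : H),
      A i * ‖x‖ ^ 2 ≤ ∑' j : J, ‖⟪x, f i j⟫‖ ^ 2 ∧
      ∑' j : J, ‖⟪x, f i j⟫‖ ^ 2 ≤ B i * ‖x‖ ^ 2)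
    (k : Fin m)
    (hpos : ∀ σ : Set J, ∀ i, i ≠ k → ∀ x : H,
      0 ≤ (⟪(∑' j : σ, ⟪f i (j : J), x⟫ • f i (j : J))
              - ∑' j : σ, ⟪f k (j : J), x⟫ • f k (j : J), x⟫).re) :
    ∀ σ : Fin m → Set J, Pairwise (Function.onFun Disjoint σ) →
      (⋃ i, σ i) = Set.univ →
      ∀ x : H,
        A k * ‖x‖ ^ 2 ≤ ∑ i, ∑' j : σ i, ‖⟪x, f i (j : J)⟫‖ ^ 2 ∧
        ∑ i, ∑' j : σ i, ‖⟪x, f i (j : J)⟫‖ ^ 2 ≤ (∑ i, B i) * ‖x‖ ^ 2 := by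
  intro σ hdisj hcover x
  -- basic summability on subtypes
  have hsub : ∀ (i : Fin m) (s : Set J) (y : H),
      Summable fun j : s => ‖⟪y, f i (j : J)⟫‖ ^ 2 := fun i s y =>
    (hSummable i y).subtype s
  -- finite Bessel bounds on subtypes
  have hfin : ∀ (i : Fin m) (s : Set J) (y : H) (t : Finset s),
      ∑ j ∈ t, ‖⟪y, f i (j : J)⟫‖ ^ 2 ≤ (max (B i) 0) * ‖y‖ ^ 2 := by
    intro i s y t
    calc ∑ j ∈ t, ‖⟪y, f i (j : J)⟫‖ ^ 2
        ≤ ∑' j : s, ‖⟪y, f i (j : J)⟫‖ ^ 2 :=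
          Summable.sum_le_tsum t (fun j _ => by positivity) (hsub i s y)
      _ ≤ ∑' j : J, ‖⟪y, f i j⟫‖ ^ 2 :=
          aux_tsum_subtype_le _ (fun j => by positivity) (hSummable i y) s
      _ ≤ B i * ‖y‖ ^ 2 := (hframe i y).2
      _ ≤ (max (B i) 0) * ‖y‖ ^ 2 := by
          apply mul_le_mul_of_nonneg_right (le_max_left _ _) (by positivity)
  -- summability of synthesis series on subtypes
  have hsyn : ∀ (i : Fin m) (s : Set J),
      Summable fun j : s => ⟪f i (j : J), x⟫ • f i (j : J) := fun i s =>
    aux_summable (fun j : s => f i (j : J)) (max (B i) 0) (le_max_right _ _)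
      (fun y t => hfin i s y t) x (hsub i s x)
  -- comparison on each piece of the partition
  have hcomp : ∀ i : Fin m,
      ∑' j : σ i, ‖⟪x, f k (j : J)⟫‖ ^ 2 ≤ ∑' j : σ i, ‖⟪x, f i (j : J)⟫‖ ^ 2 := by
    intro i
    by_cases hik : i = k
    · rw [hik]
    · have hp := hpos (σ i) i hik x
      rw [inner_sub_left, Complex.sub_re,
        aux_inner (fun j : σ i => f i (j : J)) x (hsyn i (σ i)),
        aux_inner (fun j : σ i => f k (j : J)) x (hsyn k (σ i))] at hp
      linarith
  -- partition identity for the k-th frame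
  set G : J → ℝ := fun j => ‖⟪x, f k j⟫‖ ^ 2 with hG
  have hpart : ∑ i, ∑' j : σ i, G (j : J) = ∑' j : J, G j := by
    let e2 : ((i : Fin m) × (σ i)) ≃ (⋃ i, σ i) :=
      Equiv.ofBijective _ (Set.sigmaToiUnion_bijective σ hdisj)
    have hcoe : ∀ p : (i : Fin m) × (σ i), ((e2 p : J)) = ((p.2 : J)) := by
      rintro ⟨i, j⟩; rfl
    have hUsum : Summable fun j : (⋃ i, σ i) => G (j : J) := (hSummable k x).subtype _
    have hsig : Summable fun p : (i : Fin m) × (σ i) => G ((p.2 : J)) := by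
      refine ((Equiv.summable_iff e2
        (f := fun j : (⋃ i, σ i) => G (j : J))).mpr hUsum).congr fun p => ?_
      rw [Function.comp_apply, hcoe]
    have h1 : ∑' p : (i : Fin m) × (σ i), G ((p.2 : J))
        = ∑' j : (⋃ i, σ i), G (j : J) := by
      rw [← Equiv.tsum_eq e2 (fun j : (⋃ i, σ i) => G (j : J))]
      exact tsum_congr fun p => by rw [hcoe]
    have h2 : ∑' j : (⋃ i, σ i), G (j : J) = ∑' j : J, G j := by
      rw [hcover]
      exact tsum_univ G
    rw [← h2, ← h1, Summable.tsum_sigma hsig]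
    rw [tsum_fintype]
  refine ⟨?_, ?_⟩
  · calc A k * ‖x‖ ^ 2 ≤ ∑' j : J, G j := (hframe k x).1
      _ = ∑ i, ∑' j : σ i, G (j : J) := hpart.symm
      _ ≤ ∑ i, ∑' j : σ i, ‖⟪x, f i (j : J)⟫‖ ^ 2 :=
          Finset.sum_le_sum fun i _ => hcomp i
  · calc ∑ i, ∑' j : σ i, ‖⟪x, f i (j : J)⟫‖ ^ 2
        ≤ ∑ i, B i * ‖x‖ ^ 2 := by
          refine Finset.sum_le_sum fun i _ => ?_
          calc ∑' j : σ i, ‖⟪x, f i (j : J)⟫‖ ^ 2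
              ≤ ∑' j : J, ‖⟪x, f i j⟫‖ ^ 2 :=
                aux_tsum_subtype_le _ (fun j => by positivity) (hSummable i x) (σ i)
            _ ≤ B i * ‖x‖ ^ 2 := (hframe i x).2
      _ = (∑ i, B i) * ‖x‖ ^ 2 := (Finset.sum_mul _ _ _).symm
end
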